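/- Fix ε > 0 and suppose p = p(n) satisfies p·n^{1/6} → ∞ and p < 1 − ε. Then there exists C > 0 depending only on ε such that for all sufficiently large n the following holds: for every mine assignment M* on G_n with fewer than n^{0.9} mines, the random mine assignment M*_p contains more than C·n·p^6 occurrences of the patterns P1 and P2 (counted together) with probability at least 1 − exp(−C·n·p^6/4). -/

import Mathlib

open scoped Classical

namespace Minesweeper

/-- The possible values of a cell in a grid state. -/
inductive CellState where
  | hidden : CellState
  | clue : Fin 9 → CellState
  | flag : CellState
  | mine : CellState
deriving DecidableEq

/-- The neighborhood of a cell: the cell itself together with all cells at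
ℓ∞-distance 1 from it. -/
def nbhd {a b : ℕ} (c : Fin a × Fin b) : Finset (Fin a × Fin b) :=
  Finset.univ.filter (fun c' =>
    ((c.1 : ℤ) - (c'.1 : ℤ)).natAbs ≤ 1 ∧ ((c.2 : ℤ) - (c'.2 : ℤ)).natAbs ≤ 1)

/-- The number of mines of `M` in the neighborhood of `c`. -/
def mineCount {a b : ℕ} (M : Fin a × Fin b → Bool) (c : Fin a × Fin b) : ℕ :=
  ((nbhd c).filter (fun c' => M c' = true)).card

/-- The total number of mines of a mine assignment. -/
def numMines {a b : ℕ} (M : Fin a × Fin b → Bool) : ℕ :=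
  (Finset.univ.filter (fun c => M c = true)).card

/-- A mine assignment `M` and a grid state `S` are consistent. -/
def Consistent {a b : ℕ} (M : Fin a × Fin b → Bool) (S : Fin a × Fin b → CellState) : Prop :=
  ∀ c, S c = CellState.hidden
    ∨ (∃ k : Fin 9, S c = CellState.clue k ∧ (k : ℕ) = mineCount M c)
    ∨ ((S c = CellState.flag ∨ S c = CellState.mine) ∧ M c = true)

/-- An algorithm assigns to every grid state having a hidden cell one of its hidden cells. -/
structure Algorithm (a b : ℕ) where
  move : (Fin a × Fin b → CellState) → Fin a × Fin b
  move_hidden : ∀ S : Fin a × Fin b → CellState,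
    (∃ c, S c = CellState.hidden) → S (move S) = CellState.hidden

/-- Revealing the cell `c0`. -/
def reveal {a b : ℕ} (M : Fin a × Fin b → Bool) (S : Fin a × Fin b → CellState)
    (c0 : Fin a × Fin b) : Fin a × Fin b → CellState :=
  fun c => if c = c0 then
    (if M c0 = true then CellState.mine
      else CellState.clue ⟨mineCount M c0 % 9, Nat.mod_lt _ (by norm_num)⟩)
    else S c

/-- The sequence of grid states obtained by running the algorithm `A` against the
mine assignment `M`, starting from the all-hidden state. -/
def gameState {a b : ℕ} (A : Algorithm a b) (M : Fin a × Fin b → Bool) :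
    ℕ → (Fin a × Fin b → CellState)
  | 0 => fun _ => CellState.hidden
  | t + 1 => reveal M (gameState A M t) (A.move (gameState A M t))

/-- The algorithm `A` solves the mine assignment `M`. -/
def Solves {a b : ℕ} (A : Algorithm a b) (M : Fin a × Fin b → Bool) : Prop :=
  ∃ t : ℕ, (∀ c, gameState A M t c ≠ CellState.mine) ∧
    (∀ c, gameState A M t c = CellState.hidden → M c = true)

/-- The probability of the event `E` under the random mine assignment on the `a × b` grid
in which each cell independently carries a mine with probability `p`. -/
noncomputable def mineProb (a b : ℕ) (p : ℝ) (E : Set (Fin a × Fin b → Bool)) : ℝ :=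
  ∑ M : Fin a × Fin b → Bool,
    if M ∈ E then (∏ c : Fin a × Fin b, if M c = true then p else 1 - p) else 0

/-- The probability of the event `E` under the random mine assignment `M₀_p` that agrees
with `M₀` on the mines of `M₀` and puts a mine on each empty cell of `M₀` independently
with probability `p`. -/
noncomputable def mineProbAbove (a b : ℕ) (p : ℝ) (M₀ : Fin a × Fin b → Bool)
    (E : Set (Fin a × Fin b → Bool)) : ℝ :=
  ∑ M : Fin a × Fin b → Bool,
    if M ∈ E then
      (∏ c : Fin a × Fin b,
        if M₀ c = true then (if M c = true then (1 : ℝ) else 0)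
        else (if M c = true then p else 1 - p))
    else 0

/-- A pattern: no mines in the first/last two rows and columns, at least one mine in
the third and third-to-last rows and columns. -/
def IsPattern {h w : ℕ} (P : Fin h × Fin w → Bool) : Prop :=
  (∀ c, P c = true → 2 ≤ (c.1 : ℕ) ∧ (c.1 : ℕ) + 3 ≤ h ∧ 2 ≤ (c.2 : ℕ) ∧ (c.2 : ℕ) + 3 ≤ w)
  ∧ (∃ c, P c = true ∧ (c.1 : ℕ) = 2) ∧ (∃ c, P c = true ∧ (c.1 : ℕ) + 3 = h)
  ∧ (∃ c, P c = true ∧ (c.2 : ℕ) = 2) ∧ (∃ c, P c = true ∧ (c.2 : ℕ) + 3 = w)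

/-- An ambiguous grid state. -/
def AmbiguousState {a b : ℕ} (S : Fin a × Fin b → CellState) : Prop :=
  (∃ c, S c = CellState.hidden) ∧ (∀ c, S c ≠ CellState.mine) ∧
  ∀ c, S c = CellState.hidden →
    ∃ P P' : Fin a × Fin b → Bool, IsPattern P ∧ IsPattern P' ∧
      Consistent P S ∧ Consistent P' S ∧ P c = true ∧ P' c = false

/-- An ambiguous pattern: a pattern consistent with some ambiguous grid state. -/
def AmbiguousPattern {a b : ℕ} (P : Fin a × Fin b → Bool) : Prop :=
  IsPattern P ∧ ∃ S : Fin a × Fin b → CellState, AmbiguousState S ∧ Consistent P S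

/-- The pattern `P1` (rows and columns numbered from 0 to 7 here). -/
def P1 : Fin 8 × Fin 8 → Bool := fun c =>
  decide (((c.1 : ℕ), (c.2 : ℕ)) ∈ [(2,2),(2,5),(5,2),(5,5),(3,3),(4,4)])

/-- The pattern `P2` (rows and columns numbered from 0 to 7 here). -/
def P2 : Fin 8 × Fin 8 → Bool := fun c =>
  decide (((c.1 : ℕ), (c.2 : ℕ)) ∈ [(2,2),(2,5),(5,2),(5,5),(3,4),(4,3)])

/-- `M` contains an occurrence of the pattern `P` at offset `(r, s)`. -/
def ContainsAt {a b h w : ℕ} (M : Fin a × Fin b → Bool) (P : Fin h × Fin w → Bool)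
    (r s : ℕ) : Prop :=
  ∃ (hr : r + h ≤ a) (hs : s + w ≤ b),
    ∀ (i : Fin h) (j : Fin w), M (⟨r + i, by omega⟩, ⟨s + j, by omega⟩) = P (i, j)

/-- `M` contains an occurrence of the pattern `P`. -/
def Contains {a b h w : ℕ} (M : Fin a × Fin b → Bool) (P : Fin h × Fin w → Bool) : Prop :=
  ∃ r s, ContainsAt M P r s

/-- The number of occurrences of the pattern `P` in `M`. -/
noncomputable def numOcc {a b h w : ℕ} (M : Fin a × Fin b → Bool)
    (P : Fin h × Fin w → Bool) : ℕ :=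
  ((Finset.range a ×ˢ Finset.range b).filter (fun rs => ContainsAt M P rs.1 rs.2)).card

/-- The envelope of a grid state: the union of the neighborhoods of its hidden cells. -/
noncomputable def envelope {a b : ℕ} (S : Fin a × Fin b → CellState) :
    Finset (Fin a × Fin b) :=
  Finset.univ.filter (fun c => ∃ c', S c' = CellState.hidden ∧ c ∈ nbhd c')

/-- The number of flags of `S` in the neighborhood of `c`. -/
def flagCount {a b : ℕ} (S : Fin a × Fin b → CellState) (c : Fin a × Fin b) : ℕ :=
  ((nbhd c).filter (fun c' => S c' = CellState.flag)).card

/-- The number of hidden cells of `S` in the neighborhood of `c`. -/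
def hiddenCount {a b : ℕ} (S : Fin a × Fin b → CellState) (c : Fin a × Fin b) : ℕ :=
  ((nbhd c).filter (fun c' => S c' = CellState.hidden)).card

/-- A border cell of the envelope of `S`. -/
noncomputable def IsBorderCell {a b : ℕ} (S : Fin a × Fin b → CellState)
    (c : Fin a × Fin b) : Prop :=
  c ∈ envelope S ∧ ((nbhd c).filter (fun c' => c' ∈ envelope S)).card < 9

/-- The orthogonal (horizontal/vertical) neighbors of a cell. -/
def orthNbrs {a b : ℕ} (c : Fin a × Fin b) : Finset (Fin a × Fin b) :=
  (nbhd c).filter (fun c' => c' ≠ c ∧ (c'.1 = c.1 ∨ c'.2 = c.2))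

/-- A corner cell of the envelope of `S`: a border cell at least two of whose orthogonal
neighbors lie outside the envelope. -/
noncomputable def IsCornerCell {a b : ℕ} (S : Fin a × Fin b → CellState)
    (c : Fin a × Fin b) : Prop :=
  IsBorderCell S c ∧ 2 ≤ ((orthNbrs c).filter (fun c' => c' ∉ envelope S)).card

/-- The number of mines of `M` in the `100 × 100` subgrid with upper-left offset `(r, s)`. -/
def subgridMineCount {a b : ℕ} (M : Fin a × Fin b → Bool) (r s : ℕ) : ℕ :=
  (Finset.univ.filter (fun c : Fin a × Fin b =>
    M c = true ∧ r ≤ (c.1 : ℕ) ∧ (c.1 : ℕ) < r + 100 ∧ s ≤ (c.2 : ℕ) ∧ (c.2 : ℕ) < s + 100)).card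

/-- The cells revealed when starting from the upper-left corner and iteratively revealing
every cell in the neighborhood of a revealed cell with value 0. -/
inductive Revealed {a b : ℕ} (M : Fin a × Fin b → Bool) : Fin a × Fin b → Prop where
  | corner (c : Fin a × Fin b) : (c.1 : ℕ) = 0 → (c.2 : ℕ) = 0 → Revealed M c
  | step (c c' : Fin a × Fin b) : Revealed M c → M c = false → mineCount M c = 0 →
      c' ∈ nbhd c → Revealed M c'

/-- A cell whose value in the auto-revealed grid state `S_{n,p}` is not the clue 0. -/
def NonzeroCell {a b : ℕ} (M : Fin a × Fin b → Bool) (c : Fin a × Fin b) : Prop :=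
  ¬(Revealed M c ∧ M c = false ∧ mineCount M c = 0)

/-- Two cells lie in the same island of the auto-revealed grid state `S_{n,p}`:
they are joined by a path of non-zero cells, consecutive ones at ℓ∞-distance 1. -/
def SameIsland {a b : ℕ} (M : Fin a × Fin b → Bool) (c c' : Fin a × Fin b) : Prop :=
  Relation.ReflTransGen
    (fun x y => NonzeroCell M x ∧ NonzeroCell M y ∧ x ≠ y ∧ y ∈ nbhd x) c c'

/-- The mine assignment at time `t` of the random mine process encoded by the
bijection `f` (the mine added at time `i + 1` is at cell `f i`). -/
def procAssign {a b : ℕ} (f : Fin (a * b) → Fin a × Fin b) (t : ℕ) :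
    Fin a × Fin b → Bool :=
  fun c => decide (∃ i : Fin (a * b), (i : ℕ) < t ∧ f i = c)

/-- The probability of the event `E` for the random mine process, realized as a uniformly
random bijective ordering of the cells of the grid. -/
noncomputable def procProb (a b : ℕ) (E : Set (Fin (a * b) → Fin a × Fin b)) : ℝ :=
  ((Finset.univ.filter
      (fun f : Fin (a * b) → Fin a × Fin b => Function.Bijective f ∧ f ∈ E)).card : ℝ) /
  ((Finset.univ.filter
      (fun f : Fin (a * b) → Fin a × Fin b => Function.Bijective f)).card : ℝ)

/-- The hitting time `τ`: the first time `t` at which the process contains an occurrence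
of `P1` or `P2` (`⊤` if there is no such time). -/
noncomputable def tauProc {a b : ℕ} (f : Fin (a * b) → Fin a × Fin b) : ℕ∞ :=
  sInf ((fun t : ℕ => (t : ℕ∞)) ''
    {t | Contains (procAssign f t) P1 ∨ Contains (procAssign f t) P2})

lemma sum_prod_bool {ι : Type*} [Fintype ι] [DecidableEq ι] (F : ι → Bool → ℝ) :
    ∑ M : ι → Bool, ∏ c, F c (M c) = ∏ c, (F c false + F c true) := by
  have h : ∀ c, F c false + F c true = ∑ b : Bool, F c b := fun c => by
    simp [add_comm]
  simp_rw [h]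
  exact (Fintype.prod_sum F).symm

lemma agree_prob {ι : Type*} [Fintype ι] [DecidableEq ι] (w : ι → Bool → ℝ)
    (hw : ∀ c, w c false + w c true = 1) (s : Finset ι) (g : ι → Bool) :
    ∑ M : ι → Bool, (if ∀ c ∈ s, M c = g c then (1:ℝ) else 0) * ∏ c, w c (M c)
      = ∏ c ∈ s, w c (g c) := by
  have key : ∀ M : ι → Bool,
      (if ∀ c ∈ s, M c = g c then (1:ℝ) else 0) * ∏ c, w c (M c)
        = ∏ c, (if c ∈ s then (if M c = g c then w c (M c) else 0) else w c (M c)) := by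
    intro M
    by_cases h : ∀ c ∈ s, M c = g c
    · rw [if_pos h, one_mul]
      refine Finset.prod_congr rfl fun c _ => ?_
      by_cases hc : c ∈ s
      · rw [if_pos hc, if_pos (h c hc)]
      · rw [if_neg hc]
    · rw [if_neg h, zero_mul]
      push_neg at h
      obtain ⟨c0, hc0, hne⟩ := h
      refine (Finset.prod_eq_zero (Finset.mem_univ c0) ?_).symm
      rw [if_pos hc0, if_neg hne]
  simp_rw [key]
  rw [sum_prod_bool (fun c b => if c ∈ s then (if b = g c then w c b else 0) else w c b)]
  have h2 : ∀ c : ι,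
      ((if c ∈ s then (if false = g c then w c false else 0) else w c false)
        + (if c ∈ s then (if true = g c then w c true else 0) else w c true))
      = (if c ∈ s then w c (g c) else 1) := by
    intro c
    by_cases hc : c ∈ s
    · simp only [if_pos hc]
      cases hg : g c <;> simp
    · simp only [if_neg hc]; exact hw c
  simp_rw [h2]
  rw [Finset.prod_ite_mem, Finset.univ_inter]


set_option maxHeartbeats 2000000 in
/-- for `p * n^(1/6) → ∞` with `p < 1 - ε`, there is `C > 0` (depending
only on `ε`) such that for `n` large enough, for every mine assignment `M₀` with fewer
than `n^0.9` mines, `(M₀)_p` contains more than `C n p^6` occurrences of `P1` and `P2`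
with probability at least `1 - exp(-C n p^6 / 4)`. -/
theorem statement_16
    (aN bN : ℕ → ℕ)
    (ha : Filter.Tendsto aN Filter.atTop Filter.atTop)
    (hb : Filter.Tendsto bN Filter.atTop Filter.atTop)
    (ha0 : ∀ N, 0 < aN N) (hb0 : ∀ N, 0 < bN N)
    (ε : ℝ) (hε : 0 < ε)
    (p : ℕ → ℝ) (hp0 : ∀ N, 0 ≤ p N) (hp1 : ∀ N, p N < 1 - ε)
    (hcrit : Filter.Tendsto
      (fun N => p N * ((aN N * bN N : ℕ) : ℝ) ^ ((1 : ℝ) / 6))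
      Filter.atTop Filter.atTop) :
    ∃ C > (0 : ℝ), ∀ᶠ N in Filter.atTop,
      ∀ M₀ : Fin (aN N) × Fin (bN N) → Bool,
        (numMines M₀ : ℝ) < ((aN N * bN N : ℕ) : ℝ) ^ (0.9 : ℝ) →
        1 - Real.exp (-(C * ((aN N * bN N : ℕ) : ℝ) * p N ^ 6) / 4) ≤
          mineProbAbove (aN N) (bN N) (p N) M₀
            {M | C * ((aN N * bN N : ℕ) : ℝ) * p N ^ 6
              < ((numOcc M P1 + numOcc M P2 : ℕ) : ℝ)} := by
  have hε1 : ε < 1 := by have h0 := hp0 0; have h1 := hp1 0; linarith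
  refine ⟨ε ^ 58 / 2048, by positivity, ?_⟩
  filter_upwards [ha.eventually_ge_atTop (2 ^ 45), hb.eventually_ge_atTop (2 ^ 45)] with N hA hB
  set a := aN N with hadef
  set b := bN N with hbdef
  have ha' : 0 < a := ha0 N
  have hb' : 0 < b := hb0 N
  set pp := p N with hppdef
  have hpp0 : 0 ≤ pp := hp0 N
  have hpp1 : pp < 1 - ε := hp1 N
  have hppe : pp ≤ 1 := by linarith
  set nn : ℝ := ((a * b : ℕ) : ℝ) with hnndef
  intro M₀ hM₀
  have hnN : (2:ℕ) ^ 90 ≤ a * b := by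
    calc (2:ℕ)^90 = 2^45 * 2^45 := by norm_num
    _ ≤ a * b := Nat.mul_le_mul hA hB
  have hnn0 : (0:ℝ) < nn := by
    rw [hnndef]
    have : 0 < a * b := Nat.mul_pos ha' hb'
    exact_mod_cast this
  have ha14 : 14 ≤ a := le_trans (by norm_num) hA
  have hb14 : 14 ≤ b := le_trans (by norm_num) hB
  -- the weight function
  set w : Fin a × Fin b → Bool → ℝ := fun c b' =>
    if M₀ c = true then (if b' = true then (1:ℝ) else 0)
    else (if b' = true then pp else 1 - pp) with hwdef
  have hw1 : ∀ c, w c false + w c true = 1 := by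
    intro c; by_cases h : M₀ c = true <;> simp [hwdef, h]
  have hwnn : ∀ c b', 0 ≤ w c b' := by
    intro c b'
    by_cases h : M₀ c = true <;> cases b' <;> simp [hwdef, h] <;> linarith
  have hprodnn : ∀ M : Fin a × Fin b → Bool, 0 ≤ ∏ c, w c (M c) :=
    fun M => Finset.prod_nonneg fun c _ => hwnn c (M c)
  -- blocks
  set cl : ℕ → ℕ → ℕ → ℕ → Fin a × Fin b := fun u v i j =>
    (⟨(8*u+i) % a, Nat.mod_lt _ ha'⟩, ⟨(8*v+j) % b, Nat.mod_lt _ hb'⟩) with hcldef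
  have hcl1 : ∀ u v i j : ℕ, u < a/8 → v < b/8 → i < 8 → j < 8 →
      ((cl u v i j).1 : ℕ) = 8*u+i ∧ ((cl u v i j).2 : ℕ) = 8*v+j := by
    intro u v i j hu hv hi hj
    constructor
    · show (8*u+i) % a = 8*u+i
      exact Nat.mod_eq_of_lt (by omega)
    · show (8*v+j) % b = 8*v+j
      exact Nat.mod_eq_of_lt (by omega)
  set gpat : Fin a × Fin b → Bool := fun c =>
    P1 (⟨(c.1 : ℕ) % 8, Nat.mod_lt _ (by norm_num)⟩,
        ⟨(c.2 : ℕ) % 8, Nat.mod_lt _ (by norm_num)⟩) with hgdef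
  set blk : ℕ × ℕ → Finset (Fin a × Fin b) := fun uv =>
    Finset.image (fun ij : Fin 8 × Fin 8 => cl uv.1 uv.2 ij.1 ij.2) Finset.univ with hblkdef
  set UV : Finset (ℕ × ℕ) := Finset.range (a/8) ×ˢ Finset.range (b/8) with hUVdef
  have hUVmem : ∀ uv ∈ UV, uv.1 < a/8 ∧ uv.2 < b/8 := by
    intro uv huv
    rw [hUVdef, Finset.mem_product, Finset.mem_range, Finset.mem_range] at huv
    exact huv
  have hblkco : ∀ uv ∈ UV, ∀ c ∈ blk uv, (c.1 : ℕ)/8 = uv.1 ∧ (c.2 : ℕ)/8 = uv.2 := by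
    intro uv huv c hc
    obtain ⟨h1, h2⟩ := hUVmem uv huv
    rw [hblkdef, Finset.mem_image] at hc
    obtain ⟨ij, _, rfl⟩ := hc
    obtain ⟨e1, e2⟩ := hcl1 uv.1 uv.2 ij.1 ij.2 h1 h2 ij.1.isLt ij.2.isLt
    rw [e1, e2]
    constructor <;> omega
  have hdisj : ∀ uv ∈ UV, ∀ uv' ∈ UV, uv ≠ uv' → Disjoint (blk uv) (blk uv') := by
    intro uv h1 uv' h2 hne
    rw [Finset.disjoint_left]
    intro c hc hc'
    obtain ⟨e1, e2⟩ := hblkco uv h1 c hc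
    obtain ⟨e1', e2'⟩ := hblkco uv' h2 c hc'
    exact hne (Prod.ext (by omega) (by omega))
  have hbprod : ∀ uv ∈ UV, ∀ f : Fin a × Fin b → ℝ,
      ∏ c ∈ blk uv, f c = ∏ ij : Fin 8 × Fin 8, f (cl uv.1 uv.2 ij.1 ij.2) := by
    intro uv huv f
    obtain ⟨h1, h2⟩ := hUVmem uv huv
    rw [hblkdef]
    apply Finset.prod_image
    intro ij _ ij' _ heq
    obtain ⟨e1, e2⟩ := hcl1 uv.1 uv.2 ij.1 ij.2 h1 h2 ij.1.isLt ij.2.isLt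
    obtain ⟨e1', e2'⟩ := hcl1 uv.1 uv.2 ij'.1 ij'.2 h1 h2 ij'.1.isLt ij'.2.isLt
    rw [show cl uv.1 uv.2 ij.1 ij.2 = cl uv.1 uv.2 ij'.1 ij'.2 from heq] at e1 e2
    have hi : ij.1 = ij'.1 := Fin.ext (by omega)
    have hj : ij.2 = ij'.2 := Fin.ext (by omega)
    exact Prod.ext hi hj
  have hgcl : ∀ uv ∈ UV, ∀ ij : Fin 8 × Fin 8, gpat (cl uv.1 uv.2 ij.1 ij.2) = P1 ij := by
    intro uv huv ij
    obtain ⟨h1, h2⟩ := hUVmem uv huv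
    obtain ⟨e1, e2⟩ := hcl1 uv.1 uv.2 ij.1 ij.2 h1 h2 ij.1.isLt ij.2.isLt
    rw [hgdef]
    show P1 (_, _) = P1 ij
    congr 1
    refine Prod.ext (Fin.ext ?_) (Fin.ext ?_)
    · show ((cl uv.1 uv.2 ij.1 ij.2).1 : ℕ) % 8 = (ij.1 : ℕ)
      rw [e1]; omega
    · show ((cl uv.1 uv.2 ij.1 ij.2).2 : ℕ) % 8 = (ij.2 : ℕ)
      rw [e2]; omega
  set Gd : Finset (ℕ × ℕ) := UV.filter (fun uv => ∀ c ∈ blk uv, M₀ c = false) with hGddef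
  have hGdUV : Gd ⊆ UV := Finset.filter_subset _ _
  -- block probability
  set q0 : ℝ := pp^6 * (1-pp)^58 with hq0def
  have hq0nn : 0 ≤ q0 := by
    rw [hq0def]; apply mul_nonneg (by positivity); apply pow_nonneg; linarith
  have hq01 : q0 ≤ 1 := by
    rw [hq0def]
    calc pp^6 * (1-pp)^58 ≤ 1 * 1 := by
          apply mul_le_mul (pow_le_one₀ hpp0 hppe) (pow_le_one₀ (by linarith) (by linarith))
            (pow_nonneg (by linarith) _) one_pos.le
    _ = 1 := by ring
  have hq0low : ε^58 * pp^6 ≤ q0 := by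
    have h58 : ε^58 ≤ (1-pp)^58 := pow_le_pow_left₀ hε.le (by linarith) 58
    calc ε^58 * pp^6 ≤ (1-pp)^58 * pp^6 := mul_le_mul_of_nonneg_right h58 (by positivity)
    _ = q0 := by rw [hq0def]; ring
  have hq0blk : ∀ uv ∈ Gd, ∏ c ∈ blk uv, w c (gpat c) = q0 := by
    intro uv huv
    rw [hGddef, Finset.mem_filter] at huv
    obtain ⟨huvUV, hM0⟩ := huv
    rw [hbprod uv huvUV]
    have : ∀ ij ∈ (Finset.univ : Finset (Fin 8 × Fin 8)),
        w (cl uv.1 uv.2 ij.1 ij.2) (gpat (cl uv.1 uv.2 ij.1 ij.2))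
          = (if P1 ij = true then pp else 1 - pp) := by
      intro ij _
      have hmem : cl uv.1 uv.2 ij.1 ij.2 ∈ blk uv := by
        rw [hblkdef, Finset.mem_image]
        exact ⟨ij, Finset.mem_univ _, rfl⟩
      have h0 : M₀ (cl uv.1 uv.2 ij.1 ij.2) = false := hM0 _ hmem
      rw [hgcl uv huvUV ij, hwdef]
      simp [h0]
    rw [Finset.prod_congr rfl this, Finset.prod_ite, Finset.prod_const, Finset.prod_const]
    have hc1 : (Finset.univ.filter (fun ij : Fin 8 × Fin 8 => P1 ij = true)).card = 6 := by decide
    have hc2 : (Finset.univ.filter (fun ij : Fin 8 × Fin 8 => ¬ P1 ij = true)).card = 58 := by decide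
    rw [hc1, hc2, hq0def]
  -- cardinality of Gd
  have hUVcard : UV.card = (a/8) * (b/8) := by
    rw [hUVdef, Finset.card_product, Finset.card_range, Finset.card_range]
  have hbad : (UV \ Gd).card ≤ numMines M₀ := by
    unfold numMines
    apply Finset.card_le_card_of_injOn
      (fun uv => if h : ∃ c, c ∈ blk uv ∧ M₀ c = true then h.choose
                 else (⟨0, ha'⟩, ⟨0, hb'⟩))
    · intro uv huv
      rw [Finset.mem_coe, Finset.mem_sdiff] at huv
      obtain ⟨huvUV, hnG⟩ := huv
      rw [hGddef, Finset.mem_filter] at hnG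
      push_neg at hnG
      obtain ⟨c, hc, hcne⟩ := hnG huvUV
      have hex : ∃ c, c ∈ blk uv ∧ M₀ c = true := ⟨c, hc, by simpa using hcne⟩
      simp only [Finset.mem_coe]
      rw [dif_pos hex, Finset.mem_filter]
      exact ⟨Finset.mem_univ _, hex.choose_spec.2⟩
    · intro uv huv uv' huv' heq
      rw [Finset.coe_sdiff, Set.mem_diff] at huv huv'
      have huvUV : uv ∈ UV := huv.1
      have huvUV' : uv' ∈ UV := huv'.1
      by_contra hne
      have hnG : uv ∉ Gd := huv.2
      have hnG' : uv' ∉ Gd := huv'.2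
      have hex : ∃ c, c ∈ blk uv ∧ M₀ c = true := by
        rw [hGddef, Finset.mem_filter] at hnG
        push_neg at hnG
        obtain ⟨c, hc, hcne⟩ := hnG huvUV
        exact ⟨c, hc, by simpa using hcne⟩
      have hex' : ∃ c, c ∈ blk uv' ∧ M₀ c = true := by
        rw [hGddef, Finset.mem_filter] at hnG'
        push_neg at hnG'
        obtain ⟨c, hc, hcne⟩ := hnG' huvUV'
        exact ⟨c, hc, by simpa using hcne⟩
      simp only at heq
      rw [dif_pos hex, dif_pos hex'] at heq
      have h1 := hex.choose_spec.1
      have h2 := hex'.choose_spec.1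
      rw [heq] at h1
      exact (Finset.disjoint_left.mp (hdisj uv huvUV uv' huvUV' hne) h1) h2

  have hGdlow : nn / 512 ≤ (Gd.card : ℝ) := by
    have hsd : (UV \ Gd).card = UV.card - Gd.card := Finset.card_sdiff_of_subset hGdUV
    have hle := Finset.card_le_card hGdUV
    have hUVn : a * b ≤ 256 * UV.card := by
      rw [hUVcard]
      have h1 : a ≤ 16 * (a/8) := by omega
      have h2 : b ≤ 16 * (b/8) := by omega
      calc a * b ≤ (16*(a/8)) * (16*(b/8)) := Nat.mul_le_mul h1 h2
      _ = 256 * (a/8 * (b/8)) := by ring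
    have hGn : UV.card ≤ Gd.card + numMines M₀ := by omega
    have hUVr : nn ≤ 256 * (UV.card : ℝ) := by rw [hnndef]; exact_mod_cast hUVn
    have hGr : (UV.card : ℝ) ≤ (Gd.card : ℝ) + (numMines M₀ : ℝ) := by exact_mod_cast hGn
    have hm9 : (numMines M₀ : ℝ) < nn ^ (0.9:ℝ) := hM₀
    have h512 : (512:ℝ) ≤ nn ^ (0.1:ℝ) := by
      have h2n : ((2:ℝ)^(90:ℕ)) ≤ nn := by rw [hnndef]; exact_mod_cast hnN
      have hmono := Real.rpow_le_rpow (by positivity) h2n (by norm_num : (0:ℝ) ≤ 0.1)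
      calc (512:ℝ) = ((2:ℝ)^(90:ℕ)) ^ (0.1:ℝ) := by
            rw [← Real.rpow_natCast 2 90, ← Real.rpow_mul (by norm_num : (0:ℝ) ≤ 2)]
            rw [show ((90:ℕ):ℝ) * 0.1 = ((9:ℕ):ℝ) by push_cast; norm_num, Real.rpow_natCast]
            norm_num
      _ ≤ nn ^ (0.1:ℝ) := hmono
    have hsplit : nn ^ (0.9:ℝ) * nn ^ (0.1:ℝ) = nn := by
      rw [← Real.rpow_add hnn0]; norm_num
    have h9 : nn ^ (0.9:ℝ) * 512 ≤ nn := by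
      calc nn ^ (0.9:ℝ) * 512 ≤ nn ^ (0.9:ℝ) * nn ^ (0.1:ℝ) :=
            mul_le_mul_of_nonneg_left h512 (Real.rpow_nonneg hnn0.le _)
      _ = nn := hsplit
    linarith
  set A : ℕ × ℕ → (Fin a × Fin b → Bool) → Prop :=
    fun uv M => ∀ c ∈ blk uv, M c = gpat c with hAdef
  set X : (Fin a × Fin b → Bool) → ℕ :=
    fun M => (Gd.filter (fun uv => A uv M)).card with hXdef
  have hXle : ∀ M : Fin a × Fin b → Bool, X M ≤ numOcc M P1 := by
    intro M
    rw [hXdef]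
    unfold numOcc
    apply Finset.card_le_card_of_injOn (fun uv => (8*uv.1, 8*uv.2))
    · intro uv huv
      rw [Finset.mem_coe, Finset.mem_filter] at huv
      obtain ⟨huvGd, hAuv⟩ := huv
      obtain ⟨h1, h2⟩ := hUVmem uv (hGdUV huvGd)
      rw [Finset.mem_coe, Finset.mem_filter, Finset.mem_product, Finset.mem_range, Finset.mem_range]
      dsimp only
      refine ⟨⟨by omega, by omega⟩, ?_⟩
      refine ⟨by omega, by omega, ?_⟩
      intro i j
      have hceq : ((⟨8*uv.1 + (i:ℕ), by omega⟩ : Fin a), (⟨8*uv.2 + (j:ℕ), by omega⟩ : Fin b))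
          = cl uv.1 uv.2 i j := by
        obtain ⟨e1, e2⟩ := hcl1 uv.1 uv.2 i j h1 h2 i.isLt j.isLt
        exact Prod.ext (Fin.ext (by rw [e1])) (Fin.ext (by rw [e2]))
      rw [hceq]
      have hmem : cl uv.1 uv.2 i j ∈ blk uv := by
        rw [hblkdef, Finset.mem_image]; exact ⟨(i,j), Finset.mem_univ _, rfl⟩
      rw [hAdef] at hAuv
      rw [hAuv _ hmem, hgcl uv (hGdUV huvGd) (i,j)]
    · intro uv huv uv' huv' heq
      simp only [Prod.mk.injEq] at heq
      exact Prod.ext (by omega) (by omega)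
  have hAprod : ∀ (T : Finset (ℕ × ℕ)), T ⊆ Gd → ∀ M : Fin a × Fin b → Bool,
      (∏ uv ∈ T, if A uv M then (-(1/2):ℝ) else 0)
        = (-(1/2):ℝ)^T.card * (if ∀ c ∈ T.biUnion blk, M c = gpat c then (1:ℝ) else 0) := by
    intro T hT M
    by_cases h : ∀ uv ∈ T, A uv M
    · have hall : ∀ c ∈ T.biUnion blk, M c = gpat c := by
        intro c hc
        obtain ⟨uv, huv, hcuv⟩ := Finset.mem_biUnion.mp hc
        exact h uv huv c hcuv
      rw [if_pos hall, mul_one, Finset.prod_congr rfl (fun uv huv => if_pos (h uv huv)),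
        Finset.prod_const]
    · push_neg at h
      obtain ⟨uv0, huv0, hA0⟩ := h
      have hnall : ¬ ∀ c ∈ T.biUnion blk, M c = gpat c := by
        intro hall
        exact hA0 (fun c hc => hall c (Finset.mem_biUnion.mpr ⟨uv0, huv0, hc⟩))
      rw [if_neg hnall, mul_zero]
      exact Finset.prod_eq_zero huv0 (if_neg hA0)
  have hC : ∑ M : Fin a × Fin b → Bool, ((1:ℝ)/2)^(X M) * ∏ c, w c (M c)
      = (1 - q0/2)^Gd.card := by
    have h1 : ∀ M : Fin a × Fin b → Bool, ((1:ℝ)/2)^(X M)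
        = ∏ uv ∈ Gd, ((if A uv M then (-(1/2):ℝ) else 0) + 1) := by
      intro M
      have he : ∀ uv ∈ Gd, ((if A uv M then (-(1/2):ℝ) else 0) + 1)
          = (if A uv M then ((1:ℝ)/2) else 1) := by
        intro uv _
        by_cases h : A uv M
        · rw [if_pos h, if_pos h]; norm_num
        · rw [if_neg h, if_neg h]; norm_num
      rw [Finset.prod_congr rfl he, Finset.prod_ite, Finset.prod_const, Finset.prod_const,
        one_pow, mul_one, hXdef]
    calc ∑ M : Fin a × Fin b → Bool, ((1:ℝ)/2)^(X M) * ∏ c, w c (M c)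
        = ∑ M : Fin a × Fin b → Bool, ∑ T ∈ Gd.powerset,
            ((∏ uv ∈ T, if A uv M then (-(1/2):ℝ) else 0) * ∏ _uv ∈ Gd \ T, (1:ℝ))
              * ∏ c, w c (M c) := by
          refine Finset.sum_congr rfl fun M _ => ?_
          rw [h1 M, Finset.prod_add, Finset.sum_mul]
      _ = ∑ T ∈ Gd.powerset, ∑ M : Fin a × Fin b → Bool,
            (∏ uv ∈ T, if A uv M then (-(1/2):ℝ) else 0) * ∏ c, w c (M c) := by
          rw [Finset.sum_comm]
          refine Finset.sum_congr rfl fun T _ => Finset.sum_congr rfl fun M _ => by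
            rw [Finset.prod_const_one, mul_one]
      _ = ∑ T ∈ Gd.powerset, (-(1/2):ℝ)^T.card * q0^T.card := by
          refine Finset.sum_congr rfl fun T hT => ?_
          have hTG : T ⊆ Gd := Finset.mem_powerset.mp hT
          have hper : ∀ M : Fin a × Fin b → Bool,
              (∏ uv ∈ T, if A uv M then (-(1/2):ℝ) else 0) * ∏ c, w c (M c)
              = (-(1/2):ℝ)^T.card *
                ((if ∀ c ∈ T.biUnion blk, M c = gpat c then (1:ℝ) else 0)
                  * ∏ c, w c (M c)) := by
            intro M; rw [hAprod T hTG M]; ring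
          rw [Finset.sum_congr rfl (fun M _ => hper M), ← Finset.mul_sum,
            agree_prob w hw1 (T.biUnion blk) gpat]
          congr 1
          rw [Finset.prod_biUnion]
          · rw [Finset.prod_congr rfl (fun uv huv => hq0blk uv (hTG huv)), Finset.prod_const]
          · intro uv huv uv' huv' hne
            exact hdisj uv (hGdUV (hTG huv)) uv' (hGdUV (hTG huv')) hne
      _ = ∑ T ∈ Gd.powerset, (∏ _uv ∈ T, (-(q0/2):ℝ)) * ∏ _uv ∈ Gd \ T, (1:ℝ) := by
          refine Finset.sum_congr rfl fun T _ => ?_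
          rw [Finset.prod_const, Finset.prod_const, one_pow, mul_one, ← mul_pow]
          congr 1; ring
      _ = ∏ _uv ∈ Gd, ((-(q0/2):ℝ) + 1) := (Finset.prod_add _ _ _).symm
      _ = (1 - q0/2)^Gd.card := by
          rw [Finset.prod_const]; congr 1; ring
  set k : ℝ := ε ^ 58 / 2048 * nn * pp ^ 6 with hkdef
  have hk0 : 0 ≤ k := by
    rw [hkdef]
    exact mul_nonneg (mul_nonneg (by positivity) hnn0.le) (by positivity)
  have hTot : ∑ M : Fin a × Fin b → Bool, ∏ c, w c (M c) = 1 := by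
    rw [sum_prod_bool w]
    simp only [hw1]
    exact Finset.prod_const_one
  have hgoal : mineProbAbove a b pp M₀
      {M | k < ((numOcc M P1 + numOcc M P2 : ℕ) : ℝ)}
      = ∑ M : Fin a × Fin b → Bool,
          (if k < ((numOcc M P1 + numOcc M P2 : ℕ) : ℝ) then (1:ℝ) else 0)
            * ∏ c, w c (M c) := by
    unfold mineProbAbove
    refine Finset.sum_congr rfl fun M _ => ?_
    simp only [Set.mem_setOf_eq, hwdef]
    by_cases h : k < ((numOcc M P1 + numOcc M P2 : ℕ) : ℝ) <;> simp [h]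
  have hsplitE : ∑ M : Fin a × Fin b → Bool,
      (if k < ((numOcc M P1 + numOcc M P2 : ℕ) : ℝ) then (1:ℝ) else 0) * ∏ c, w c (M c)
      = 1 - ∑ M : Fin a × Fin b → Bool,
          (if ((numOcc M P1 + numOcc M P2 : ℕ) : ℝ) ≤ k then (1:ℝ) else 0)
            * ∏ c, w c (M c) := by
    have hadd : ∑ M : Fin a × Fin b → Bool,
        (if k < ((numOcc M P1 + numOcc M P2 : ℕ) : ℝ) then (1:ℝ) else 0) * ∏ c, w c (M c)
        + ∑ M : Fin a × Fin b → Bool,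
          (if ((numOcc M P1 + numOcc M P2 : ℕ) : ℝ) ≤ k then (1:ℝ) else 0) * ∏ c, w c (M c)
        = ∑ M : Fin a × Fin b → Bool, ∏ c, w c (M c) := by
      rw [← Finset.sum_add_distrib]
      refine Finset.sum_congr rfl fun M _ => ?_
      by_cases h : k < ((numOcc M P1 + numOcc M P2 : ℕ) : ℝ)
      · rw [if_pos h, if_neg (not_le.mpr h)]; ring
      · rw [if_neg h, if_pos (not_lt.mp h)]; ring
    rw [hTot] at hadd
    linarith
  have hS0 : ∑ M : Fin a × Fin b → Bool,
      (if ((numOcc M P1 + numOcc M P2 : ℕ) : ℝ) ≤ k then (1:ℝ) else 0) * ∏ c, w c (M c)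
      ≤ Real.exp (-k/4) := by
    have h2k : (0:ℝ) ≤ (2:ℝ)^k := Real.rpow_nonneg (by norm_num) k
    have hstep1 : ∀ M : Fin a × Fin b → Bool,
        (if ((numOcc M P1 + numOcc M P2 : ℕ) : ℝ) ≤ k then (1:ℝ) else 0) * ∏ c, w c (M c)
        ≤ (2:ℝ)^k * (((1:ℝ)/2)^(X M) * ∏ c, w c (M c)) := by
      intro M
      by_cases h : ((numOcc M P1 + numOcc M P2 : ℕ) : ℝ) ≤ k
      · rw [if_pos h, one_mul]
        have hXk : ((X M : ℕ) : ℝ) ≤ k := by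
          refine le_trans ?_ h
          have hn : X M ≤ numOcc M P1 + numOcc M P2 :=
            le_trans (hXle M) (Nat.le_add_right _ _)
          exact_mod_cast hn
        have h2X : (2:ℝ)^(X M) ≤ (2:ℝ)^k := by
          rw [← Real.rpow_natCast 2 (X M)]
          exact Real.rpow_le_rpow_of_exponent_le one_le_two hXk
        have h1le : (1:ℝ) ≤ (2:ℝ)^k * ((1:ℝ)/2)^(X M) := by
          calc (1:ℝ) = (2:ℝ)^(X M) * ((1:ℝ)/2)^(X M) := by rw [← mul_pow]; norm_num
          _ ≤ (2:ℝ)^k * ((1:ℝ)/2)^(X M) :=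
              mul_le_mul_of_nonneg_right h2X (by positivity)
        calc ∏ c, w c (M c) = 1 * ∏ c, w c (M c) := (one_mul _).symm
        _ ≤ ((2:ℝ)^k * ((1:ℝ)/2)^(X M)) * ∏ c, w c (M c) :=
            mul_le_mul_of_nonneg_right h1le (hprodnn M)
        _ = (2:ℝ)^k * (((1:ℝ)/2)^(X M) * ∏ c, w c (M c)) := by ring
      · rw [if_neg h, zero_mul]
        exact mul_nonneg h2k (mul_nonneg (by positivity) (hprodnn M))
    calc ∑ M : Fin a × Fin b → Bool,
        (if ((numOcc M P1 + numOcc M P2 : ℕ) : ℝ) ≤ k then (1:ℝ) else 0) * ∏ c, w c (M c)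
        ≤ ∑ M : Fin a × Fin b → Bool,
            (2:ℝ)^k * (((1:ℝ)/2)^(X M) * ∏ c, w c (M c)) :=
          Finset.sum_le_sum (fun M _ => hstep1 M)
      _ = (2:ℝ)^k * ∑ M : Fin a × Fin b → Bool, ((1:ℝ)/2)^(X M) * ∏ c, w c (M c) := by
          rw [← Finset.mul_sum]
      _ = (2:ℝ)^k * (1 - q0/2)^Gd.card := by rw [hC]
      _ ≤ (2:ℝ)^k * Real.exp (-(q0/2))^Gd.card := by
          apply mul_le_mul_of_nonneg_left _ h2k
          apply pow_le_pow_left₀ (by linarith) _ Gd.card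
          have := Real.add_one_le_exp (-(q0/2))
          linarith
      _ = (2:ℝ)^k * Real.exp ((Gd.card : ℝ) * (-(q0/2))) := by rw [Real.exp_nat_mul]
      _ = Real.exp (Real.log 2 * k + (Gd.card:ℝ) * (-(q0/2))) := by
          rw [Real.exp_add, Real.rpow_def_of_pos (by norm_num : (0:ℝ) < 2)]
      _ ≤ Real.exp (-k/4) := by
          apply Real.exp_le_exp.mpr
          have hlog : Real.log 2 ≤ 0.7 := by
            have := Real.log_two_lt_d9; linarith
          have h4k : 4 * k ≤ q0 * (Gd.card : ℝ) := by
            have hmul : (ε^58 * pp^6) * (nn/512) ≤ q0 * (Gd.card:ℝ) :=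
              mul_le_mul hq0low hGdlow (by positivity) hq0nn
            calc 4 * k = (ε^58 * pp^6) * (nn/512) := by rw [hkdef]; ring
            _ ≤ q0 * (Gd.card:ℝ) := hmul
          have hlk : Real.log 2 * k ≤ 0.7 * k := mul_le_mul_of_nonneg_right hlog hk0
          nlinarith
  rw [hgoal, hsplitE]
  have : Real.exp (-k/4) = Real.exp (-(ε ^ 58 / 2048 * nn * pp ^ 6)/4) := by rw [hkdef]
  linarith [hS0]



end Minesweeper
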